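/- arXiv:1603.03342 — 2 statements merged into one kernel-verified Lean document; each statement's English description precedes it below -/
import Mathlib

section
/- (i) Let q be an ordinary central configuration in S³ with constant λ (so ∇_{qᵢ}U(q) = λ∇_{qᵢ}I(q) for all i, with some ∇_{qᵢ}U(q) ≠ 0). Then for every α,β ∈ ℝ with λ = (β²−α²)/2, the curve t ↦ (A_{α,β}(t)q₁,…,A_{α,β}(t)q_N) satisfies mᵢ q̈ᵢ(t) = ∇_{qᵢ}U(q(t)) − mᵢ(q̇ᵢ(t)·q̇ᵢ(t))qᵢ(t) for all t and i. (ii) Let q be a central configuration in H³ with constant λ. Then for every α,β ∈ ℝ with λ = −(α²+β²)/2 (such α,β exist since λ < 0), the curve t ↦ (B_{α,β}(t)q₁,…,B_{α,β}(t)q_N) satisfies mᵢ q̈ᵢ(t) = ∇_{qᵢ}U(q(t)) + mᵢ(q̇ᵢ(t)⊙q̇ᵢ(t))qᵢ(t) for all t and i. -/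
noncomputable section
open Real Finset

/-- Vectors in `ℝ⁴`. -/
abbrev V4 : Type := Fin 4 → ℝ

/-- Euclidean dot product on `ℝ⁴`. -/
def dot4 (p q : V4) : ℝ := p 0 * q 0 + p 1 * q 1 + p 2 * q 2 + p 3 * q 3

/-- Minkowski bilinear form on `ℝ⁴`. -/
def mdot4 (p q : V4) : ℝ := p 0 * q 0 + p 1 * q 1 + p 2 * q 2 - p 3 * q 3

/-- The unit sphere `S³ ⊂ ℝ⁴`. -/
def sphere3 : Set V4 := {p | p 0 ^ 2 + p 1 ^ 2 + p 2 ^ 2 + p 3 ^ 2 = 1}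

/-- The upper hyperbolic sphere `H³ ⊂ ℝ⁴`. -/
def hyper3 : Set V4 := {p | p 0 ^ 2 + p 1 ^ 2 + p 2 ^ 2 - p 3 ^ 2 = -1 ∧ 0 < p 3}

/-- Inverse hyperbolic cosine. -/
def arcosh (x : ℝ) : ℝ := Real.log (x + Real.sqrt (x ^ 2 - 1))

/-- Spherical distance on `S³`. -/
def dS (p q : V4) : ℝ := Real.arccos (dot4 p q)

/-- Hyperbolic distance on `H³`. -/
def dH (p q : V4) : ℝ := _root_.arcosh (-(mdot4 p q))

/-- Gradient of the cotangent force function on `(S³)^N` at the body `i`. -/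
def gradUS {N : ℕ} (m : Fin N → ℝ) (q : Fin N → V4) (i : Fin N) : V4 :=
  ∑ j ∈ Finset.univ.erase i,
    (m i * m j / (Real.sin (dS (q i) (q j))) ^ 3) • (q j - Real.cos (dS (q i) (q j)) • q i)

/-- Gradient of the cotangent force function on `(H³)^N` at the body `i`. -/
def gradUH {N : ℕ} (m : Fin N → ℝ) (q : Fin N → V4) (i : Fin N) : V4 :=
  ∑ j ∈ Finset.univ.erase i,
    (m i * m j / (Real.sinh (dH (q i) (q j))) ^ 3) • (q j - Real.cosh (dH (q i) (q j)) • q i)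

/-- Gradient of the moment of inertia `I(q) = Σ mᵢ(xᵢ²+yᵢ²)` on `(S³)^N` at the body `i`. -/
def gradIS {N : ℕ} (m : Fin N → ℝ) (q : Fin N → V4) (i : Fin N) : V4 :=
  (2 * m i) •
    ![q i 0 * (q i 2 ^ 2 + q i 3 ^ 2), q i 1 * (q i 2 ^ 2 + q i 3 ^ 2),
      -(q i 2 * (q i 0 ^ 2 + q i 1 ^ 2)), -(q i 3 * (q i 0 ^ 2 + q i 1 ^ 2))]

/-- Gradient of the moment of inertia `I(q) = Σ mᵢ(xᵢ²+yᵢ²)` on `(H³)^N` at the body `i`. -/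
def gradIH {N : ℕ} (m : Fin N → ℝ) (q : Fin N → V4) (i : Fin N) : V4 :=
  (2 * m i) •
    ![q i 0 * (q i 3 ^ 2 - q i 2 ^ 2), q i 1 * (q i 3 ^ 2 - q i 2 ^ 2),
      q i 2 * (q i 0 ^ 2 + q i 1 ^ 2), q i 3 * (q i 0 ^ 2 + q i 1 ^ 2)]

/-- The action of the rotation `A_{α,β}(t) ∈ SO(4)` on `ℝ⁴`. -/
def rotA (α β t : ℝ) (p : V4) : V4 :=
  ![Real.cos (α * t) * p 0 - Real.sin (α * t) * p 1,
    Real.sin (α * t) * p 0 + Real.cos (α * t) * p 1,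
    Real.cos (β * t) * p 2 - Real.sin (β * t) * p 3,
    Real.sin (β * t) * p 2 + Real.cos (β * t) * p 3]

/-- The action of the transformation `B_{α,β}(t) ∈ SO(3,1)` on `ℝ⁴`. -/
def rotB (α β t : ℝ) (p : V4) : V4 :=
  ![Real.cos (α * t) * p 0 - Real.sin (α * t) * p 1,
    Real.sin (α * t) * p 0 + Real.cos (α * t) * p 1,
    Real.cosh (β * t) * p 2 + Real.sinh (β * t) * p 3,
    Real.sinh (β * t) * p 2 + Real.cosh (β * t) * p 3]

/-- The great circle `S¹_xy`. -/
def S1xy : Set V4 := {p | p 0 ^ 2 + p 1 ^ 2 = 1 ∧ p 2 = 0 ∧ p 3 = 0}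

/-- The great circle `S¹_zw`. -/
def S1zw : Set V4 := {p | p 2 ^ 2 + p 3 ^ 2 = 1 ∧ p 0 = 0 ∧ p 1 = 0}

/-- The geodesic `H¹_zw`. -/
def H1zw : Set V4 := {p | p 3 ^ 2 - p 2 ^ 2 = 1 ∧ 0 < p 3 ∧ p 0 = 0 ∧ p 1 = 0}

/-! ### Auxiliary machinery -/

/-- First derivative of `s ↦ rotA α β s p`. -/
def drotA (α β t : ℝ) (p : V4) : V4 :=
  ![α * (-Real.sin (α * t) * p 0 - Real.cos (α * t) * p 1),
    α * (Real.cos (α * t) * p 0 - Real.sin (α * t) * p 1),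
    β * (-Real.sin (β * t) * p 2 - Real.cos (β * t) * p 3),
    β * (Real.cos (β * t) * p 2 - Real.sin (β * t) * p 3)]

/-- Second derivative of `s ↦ rotA α β s p`. -/
def ddrotA (α β t : ℝ) (p : V4) : V4 :=
  ![-(α ^ 2) * (Real.cos (α * t) * p 0 - Real.sin (α * t) * p 1),
    -(α ^ 2) * (Real.sin (α * t) * p 0 + Real.cos (α * t) * p 1),
    -(β ^ 2) * (Real.cos (β * t) * p 2 - Real.sin (β * t) * p 3),
    -(β ^ 2) * (Real.sin (β * t) * p 2 + Real.cos (β * t) * p 3)]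

/-- First derivative of `s ↦ rotB α β s p`. -/
def drotB (α β t : ℝ) (p : V4) : V4 :=
  ![α * (-Real.sin (α * t) * p 0 - Real.cos (α * t) * p 1),
    α * (Real.cos (α * t) * p 0 - Real.sin (α * t) * p 1),
    β * (Real.sinh (β * t) * p 2 + Real.cosh (β * t) * p 3),
    β * (Real.cosh (β * t) * p 2 + Real.sinh (β * t) * p 3)]

/-- Second derivative of `s ↦ rotB α β s p`. -/
def ddrotB (α β t : ℝ) (p : V4) : V4 :=
  ![-(α ^ 2) * (Real.cos (α * t) * p 0 - Real.sin (α * t) * p 1),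
    -(α ^ 2) * (Real.sin (α * t) * p 0 + Real.cos (α * t) * p 1),
    β ^ 2 * (Real.cosh (β * t) * p 2 + Real.sinh (β * t) * p 3),
    β ^ 2 * (Real.sinh (β * t) * p 2 + Real.cosh (β * t) * p 3)]

lemma hasDerivAt_lin (α t : ℝ) : HasDerivAt (fun s : ℝ => α * s) α t := by
  simpa using (hasDerivAt_id t).const_mul α

lemma hasDerivAt_rotA (α β t : ℝ) (p : V4) :
    HasDerivAt (fun s => rotA α β s p) (drotA α β t p) t := by
  rw [hasDerivAt_pi]
  intro i
  fin_cases i <;>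
    simp only [rotA, drotA, Fin.zero_eta, Fin.mk_one, Fin.reduceFinMk, Matrix.cons_val_zero, Matrix.cons_val_one, Matrix.head_cons,
      Matrix.cons_val_two, Matrix.tail_cons, Matrix.cons_val_three, Fin.isValue]
  · have h := (((hasDerivAt_lin α t).cos.mul_const (p 0)).sub
      ((hasDerivAt_lin α t).sin.mul_const (p 1)))
    convert h using 1
    · rfl
    · ring
  · have h := (((hasDerivAt_lin α t).sin.mul_const (p 0)).add
      ((hasDerivAt_lin α t).cos.mul_const (p 1)))
    convert h using 1
    · rfl
    · ring
  · have h := (((hasDerivAt_lin β t).cos.mul_const (p 2)).sub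
      ((hasDerivAt_lin β t).sin.mul_const (p 3)))
    convert h using 1
    · rfl
    · ring
  · have h := (((hasDerivAt_lin β t).sin.mul_const (p 2)).add
      ((hasDerivAt_lin β t).cos.mul_const (p 3)))
    convert h using 1
    · rfl
    · ring

lemma hasDerivAt_drotA (α β t : ℝ) (p : V4) :
    HasDerivAt (fun s => drotA α β s p) (ddrotA α β t p) t := by
  rw [hasDerivAt_pi]
  intro i
  fin_cases i <;>
    simp only [drotA, ddrotA, Fin.zero_eta, Fin.mk_one, Fin.reduceFinMk, Matrix.cons_val_zero, Matrix.cons_val_one, Matrix.head_cons,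
      Matrix.cons_val_two, Matrix.tail_cons, Matrix.cons_val_three, Fin.isValue]
  · have h := ((((hasDerivAt_lin α t).sin.neg.mul_const (p 0)).sub
      ((hasDerivAt_lin α t).cos.mul_const (p 1))).const_mul α)
    exact h.congr_deriv (by ring)
  · have h := ((((hasDerivAt_lin α t).cos.mul_const (p 0)).sub
      ((hasDerivAt_lin α t).sin.mul_const (p 1))).const_mul α)
    exact h.congr_deriv (by ring)
  · have h := ((((hasDerivAt_lin β t).sin.neg.mul_const (p 2)).sub
      ((hasDerivAt_lin β t).cos.mul_const (p 3))).const_mul β)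
    exact h.congr_deriv (by ring)
  · have h := ((((hasDerivAt_lin β t).cos.mul_const (p 2)).sub
      ((hasDerivAt_lin β t).sin.mul_const (p 3))).const_mul β)
    exact h.congr_deriv (by ring)

lemma hasDerivAt_rotB (α β t : ℝ) (p : V4) :
    HasDerivAt (fun s => rotB α β s p) (drotB α β t p) t := by
  rw [hasDerivAt_pi]
  intro i
  fin_cases i <;>
    simp only [rotB, drotB, Fin.zero_eta, Fin.mk_one, Fin.reduceFinMk, Matrix.cons_val_zero, Matrix.cons_val_one, Matrix.head_cons,
      Matrix.cons_val_two, Matrix.tail_cons, Matrix.cons_val_three, Fin.isValue]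
  · have h := (((hasDerivAt_lin α t).cos.mul_const (p 0)).sub
      ((hasDerivAt_lin α t).sin.mul_const (p 1)))
    convert h using 1
    · rfl
    · ring
  · have h := (((hasDerivAt_lin α t).sin.mul_const (p 0)).add
      ((hasDerivAt_lin α t).cos.mul_const (p 1)))
    convert h using 1
    · rfl
    · ring
  · have h := (((hasDerivAt_lin β t).cosh.mul_const (p 2)).add
      ((hasDerivAt_lin β t).sinh.mul_const (p 3)))
    convert h using 1
    · rfl
    · ring
  · have h := (((hasDerivAt_lin β t).sinh.mul_const (p 2)).add
      ((hasDerivAt_lin β t).cosh.mul_const (p 3)))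
    convert h using 1
    · rfl
    · ring

lemma hasDerivAt_drotB (α β t : ℝ) (p : V4) :
    HasDerivAt (fun s => drotB α β s p) (ddrotB α β t p) t := by
  rw [hasDerivAt_pi]
  intro i
  fin_cases i <;>
    simp only [drotB, ddrotB, Fin.zero_eta, Fin.mk_one, Fin.reduceFinMk, Matrix.cons_val_zero, Matrix.cons_val_one, Matrix.head_cons,
      Matrix.cons_val_two, Matrix.tail_cons, Matrix.cons_val_three, Fin.isValue]
  · have h := ((((hasDerivAt_lin α t).sin.neg.mul_const (p 0)).sub
      ((hasDerivAt_lin α t).cos.mul_const (p 1))).const_mul α)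
    exact h.congr_deriv (by ring)
  · have h := ((((hasDerivAt_lin α t).cos.mul_const (p 0)).sub
      ((hasDerivAt_lin α t).sin.mul_const (p 1))).const_mul α)
    exact h.congr_deriv (by ring)
  · have h := ((((hasDerivAt_lin β t).sinh.mul_const (p 2)).add
      ((hasDerivAt_lin β t).cosh.mul_const (p 3))).const_mul β)
    exact h.congr_deriv (by ring)
  · have h := ((((hasDerivAt_lin β t).cosh.mul_const (p 2)).add
      ((hasDerivAt_lin β t).sinh.mul_const (p 3))).const_mul β)
    exact h.congr_deriv (by ring)

lemma deriv_rotA (α β : ℝ) (p : V4) :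
    deriv (fun s => rotA α β s p) = fun s => drotA α β s p :=
  funext fun s => (hasDerivAt_rotA α β s p).deriv

lemma deriv_deriv_rotA (α β t : ℝ) (p : V4) :
    deriv (deriv (fun s => rotA α β s p)) t = ddrotA α β t p := by
  rw [deriv_rotA]; exact (hasDerivAt_drotA α β t p).deriv

lemma deriv_rotB (α β : ℝ) (p : V4) :
    deriv (fun s => rotB α β s p) = fun s => drotB α β s p :=
  funext fun s => (hasDerivAt_rotB α β s p).deriv

lemma deriv_deriv_rotB (α β t : ℝ) (p : V4) :
    deriv (deriv (fun s => rotB α β s p)) t = ddrotB α β t p := by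
  rw [deriv_rotB]; exact (hasDerivAt_drotB α β t p).deriv

/-- `rotA` as a linear map. -/
def rotAL (α β t : ℝ) : V4 →ₗ[ℝ] V4 where
  toFun := rotA α β t
  map_add' p q := by funext i; fin_cases i <;> simp [rotA] <;> ring
  map_smul' c p := by funext i; fin_cases i <;> simp [rotA] <;> ring

/-- `rotB` as a linear map. -/
def rotBL (α β t : ℝ) : V4 →ₗ[ℝ] V4 where
  toFun := rotB α β t
  map_add' p q := by funext i; fin_cases i <;> simp [rotB] <;> ring
  map_smul' c p := by funext i; fin_cases i <;> simp [rotB] <;> ring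

lemma dot4_rotA (α β t : ℝ) (p p' : V4) :
    dot4 (rotA α β t p) (rotA α β t p') = dot4 p p' := by
  simp only [dot4, rotA, Fin.zero_eta, Fin.mk_one, Fin.reduceFinMk, Matrix.cons_val_zero, Matrix.cons_val_one, Matrix.head_cons,
    Matrix.cons_val_two, Matrix.tail_cons, Matrix.cons_val_three]
  linear_combination (p 0 * p' 0 + p 1 * p' 1) * Real.sin_sq_add_cos_sq (α * t) +
    (p 2 * p' 2 + p 3 * p' 3) * Real.sin_sq_add_cos_sq (β * t)

lemma mdot4_rotB (α β t : ℝ) (p p' : V4) :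
    mdot4 (rotB α β t p) (rotB α β t p') = mdot4 p p' := by
  simp only [mdot4, rotB, Fin.zero_eta, Fin.mk_one, Fin.reduceFinMk, Matrix.cons_val_zero, Matrix.cons_val_one, Matrix.head_cons,
    Matrix.cons_val_two, Matrix.tail_cons, Matrix.cons_val_three]
  linear_combination (p 0 * p' 0 + p 1 * p' 1) * Real.sin_sq_add_cos_sq (α * t) +
    (p 2 * p' 2 - p 3 * p' 3) * Real.cosh_sq_sub_sinh_sq (β * t)

lemma dS_rotA (α β t : ℝ) (p p' : V4) : dS (rotA α β t p) (rotA α β t p') = dS p p' := by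
  rw [dS, dS, dot4_rotA]

lemma dH_rotB (α β t : ℝ) (p p' : V4) : dH (rotB α β t p) (rotB α β t p') = dH p p' := by
  rw [dH, dH, mdot4_rotB]

lemma gradUS_rotA {N : ℕ} (α β t : ℝ) (m : Fin N → ℝ) (q : Fin N → V4) (i : Fin N) :
    gradUS m (fun j => rotA α β t (q j)) i = rotA α β t (gradUS m q i) := by
  show _ = rotAL α β t (gradUS m q i)
  unfold gradUS
  rw [map_sum]
  refine Finset.sum_congr rfl fun j _ => ?_
  rw [dS_rotA, map_smul, map_sub, map_smul]
  rfl

lemma gradUH_rotB {N : ℕ} (α β t : ℝ) (m : Fin N → ℝ) (q : Fin N → V4) (i : Fin N) :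
    gradUH m (fun j => rotB α β t (q j)) i = rotB α β t (gradUH m q i) := by
  show _ = rotBL α β t (gradUH m q i)
  unfold gradUH
  rw [map_sum]
  refine Finset.sum_congr rfl fun j _ => ?_
  rw [dH_rotB, map_smul, map_sub, map_smul]
  rfl

lemma dot4_drotA (α β t : ℝ) (p : V4) :
    dot4 (drotA α β t p) (drotA α β t p) =
      α ^ 2 * (p 0 ^ 2 + p 1 ^ 2) + β ^ 2 * (p 2 ^ 2 + p 3 ^ 2) := by
  simp only [dot4, drotA, Fin.zero_eta, Fin.mk_one, Fin.reduceFinMk, Matrix.cons_val_zero, Matrix.cons_val_one, Matrix.head_cons,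
    Matrix.cons_val_two, Matrix.tail_cons, Matrix.cons_val_three]
  linear_combination (α ^ 2 * (p 0 ^ 2 + p 1 ^ 2)) * Real.sin_sq_add_cos_sq (α * t) +
    (β ^ 2 * (p 2 ^ 2 + p 3 ^ 2)) * Real.sin_sq_add_cos_sq (β * t)

lemma mdot4_drotB (α β t : ℝ) (p : V4) :
    mdot4 (drotB α β t p) (drotB α β t p) =
      α ^ 2 * (p 0 ^ 2 + p 1 ^ 2) + β ^ 2 * (p 3 ^ 2 - p 2 ^ 2) := by
  simp only [mdot4, drotB, Fin.zero_eta, Fin.mk_one, Fin.reduceFinMk, Matrix.cons_val_zero, Matrix.cons_val_one, Matrix.head_cons,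
    Matrix.cons_val_two, Matrix.tail_cons, Matrix.cons_val_three]
  linear_combination (α ^ 2 * (p 0 ^ 2 + p 1 ^ 2)) * Real.sin_sq_add_cos_sq (α * t) +
    (β ^ 2 * (p 3 ^ 2 - p 2 ^ 2)) * Real.cosh_sq_sub_sinh_sq (β * t)

/-- Each central configuration gives rise to families of relative
equilibria: part (i) in `S³`, part (ii) in `H³`. -/
theorem statement10 :
    (∀ (N : ℕ) (m : Fin N → ℝ), (∀ i, 0 < m i) → ∀ q : Fin N → V4,
      (∀ i, q i ∈ sphere3) → (∀ i j, i ≠ j → q i ≠ q j ∧ q i ≠ -q j) →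
      ∀ lam : ℝ, (∀ i, gradUS m q i = lam • gradIS m q i) →
      (∃ i, gradUS m q i ≠ 0) →
      ∀ α β : ℝ, lam = (β ^ 2 - α ^ 2) / 2 →
      ∀ (t : ℝ) (i : Fin N),
        m i • deriv (deriv (fun s => rotA α β s (q i))) t =
          gradUS m (fun j => rotA α β t (q j)) i -
            (m i * dot4 (deriv (fun s => rotA α β s (q i)) t)
              (deriv (fun s => rotA α β s (q i)) t)) • rotA α β t (q i)) ∧
    (∀ (N : ℕ) (m : Fin N → ℝ), (∀ i, 0 < m i) → ∀ q : Fin N → V4,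
      (∀ i, q i ∈ hyper3) → (∀ i j, i ≠ j → q i ≠ q j) →
      ∀ lam : ℝ, (∀ i, gradUH m q i = lam • gradIH m q i) →
      ∀ α β : ℝ, lam = -(α ^ 2 + β ^ 2) / 2 →
      ∀ (t : ℝ) (i : Fin N),
        m i • deriv (deriv (fun s => rotB α β s (q i))) t =
          gradUH m (fun j => rotB α β t (q j)) i +
            (m i * mdot4 (deriv (fun s => rotB α β s (q i)) t)
              (deriv (fun s => rotB α β s (q i)) t)) • rotB α β t (q i)) := by
  constructor
  · intro N m _hm q hq _hns lam hc _ho α β hlam t i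
    have hs : q i 0 ^ 2 + q i 1 ^ 2 + q i 2 ^ 2 + q i 3 ^ 2 = 1 := hq i
    rw [deriv_deriv_rotA, gradUS_rotA, hc i,
      show deriv (fun s => rotA α β s (q i)) t = drotA α β t (q i) from
        (hasDerivAt_rotA α β t (q i)).deriv,
      dot4_drotA]
    subst hlam
    funext k
    fin_cases k <;>
      simp only [gradIS, rotA, ddrotA, Pi.smul_apply, smul_eq_mul, Pi.sub_apply,
        Fin.zero_eta, Fin.mk_one, Fin.reduceFinMk, Matrix.cons_val_zero, Matrix.cons_val_one,
        Matrix.head_cons, Matrix.cons_val_two, Matrix.tail_cons, Matrix.cons_val_three,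
        Fin.isValue]
    · linear_combination (m i * α ^ 2 * (Real.cos (α * t) * q i 0 - Real.sin (α * t) * q i 1)) * hs
    · linear_combination (m i * α ^ 2 * (Real.sin (α * t) * q i 0 + Real.cos (α * t) * q i 1)) * hs
    · linear_combination (m i * β ^ 2 * (Real.cos (β * t) * q i 2 - Real.sin (β * t) * q i 3)) * hs
    · linear_combination (m i * β ^ 2 * (Real.sin (β * t) * q i 2 + Real.cos (β * t) * q i 3)) * hs
  · intro N m _hm q hq _hns lam hc α β hlam t i
    have hs : q i 0 ^ 2 + q i 1 ^ 2 + q i 2 ^ 2 - q i 3 ^ 2 = -1 := (hq i).1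
    rw [deriv_deriv_rotB, gradUH_rotB, hc i,
      show deriv (fun s => rotB α β s (q i)) t = drotB α β t (q i) from
        (hasDerivAt_rotB α β t (q i)).deriv,
      mdot4_drotB]
    subst hlam
    funext k
    fin_cases k <;>
      simp only [gradIH, rotB, ddrotB, Pi.smul_apply, smul_eq_mul, Pi.add_apply,
        Fin.zero_eta, Fin.mk_one, Fin.reduceFinMk, Matrix.cons_val_zero, Matrix.cons_val_one,
        Matrix.head_cons, Matrix.cons_val_two, Matrix.tail_cons, Matrix.cons_val_three,
        Fin.isValue]
    · linear_combination (-(m i * α ^ 2) * (Real.cos (α * t) * q i 0 - Real.sin (α * t) * q i 1)) * hs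
    · linear_combination (-(m i * α ^ 2) * (Real.sin (α * t) * q i 0 + Real.cos (α * t) * q i 1)) * hs
    · linear_combination (m i * β ^ 2 * (Real.cosh (β * t) * q i 2 + Real.sinh (β * t) * q i 3)) * hs
    · linear_combination (m i * β ^ 2 * (Real.sinh (β * t) * q i 2 + Real.cosh (β * t) * q i 3)) * hs
end
end

section
/- Let q = (q₁,…,q_N), qᵢ = (xᵢ,yᵢ,zᵢ,wᵢ), be an ordinary central configuration in S³ or in H³, i.e. a nonsingular configuration satisfying ∇_{qᵢ}U(q) = λ∇_{qᵢ}I(q) for all i with λ ≠ 0. Then Σᵢ mᵢxᵢzᵢ = Σᵢ mᵢxᵢwᵢ = Σᵢ mᵢyᵢzᵢ = Σᵢ mᵢyᵢwᵢ = 0. -/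
noncomputable section
open Real Finset

lemma dot4_comm (p q : V4) : dot4 p q = dot4 q p := by unfold dot4; ring

lemma mdot4_comm (p q : V4) : mdot4 p q = mdot4 q p := by unfold mdot4; ring

lemma dS_comm (p q : V4) : dS p q = dS q p := by unfold dS; rw [dot4_comm]

lemma dH_comm (p q : V4) : dH p q = dH q p := by unfold dH; rw [mdot4_comm]

lemma sum_antisym {N : ℕ} (f : Fin N → Fin N → ℝ)
    (hf : ∀ i j, f i j = - f j i) :
    ∑ i, ∑ j ∈ Finset.univ.erase i, f i j = 0 := by
  have h1 : ∀ i : Fin N, ∑ j ∈ Finset.univ.erase i, f i j = ∑ j, f i j := by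
    intro i
    apply Finset.sum_erase
    have := hf i i; linarith
  simp_rw [h1]
  have h2 : ∑ i, ∑ j, f i j = ∑ j, ∑ i, f i j := Finset.sum_comm
  have h3 : ∑ j : Fin N, ∑ i : Fin N, f i j = - ∑ j : Fin N, ∑ i : Fin N, f j i := by
    rw [← Finset.sum_neg_distrib]
    exact Finset.sum_congr rfl fun j _ => by
      rw [← Finset.sum_neg_distrib]
      exact Finset.sum_congr rfl fun i _ => hf i j
  linarith

lemma key {N : ℕ} (m : Fin N → ℝ) (q : Fin N → V4)
    (lam : ℝ) (hlam : lam ≠ 0)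
    (c k : Fin N → Fin N → ℝ) (G : Fin N → V4) (a b : Fin 4)
    (hcsym : ∀ i j, c i j = c j i)
    (hgrad : ∀ i, (∑ j ∈ Finset.univ.erase i, c i j • (q j - k i j • q i)) = lam • G i)
    (hG : ∀ i, q i b * G i a - q i a * G i b = 2 * m i * (q i a * q i b)) :
    ∑ i, m i * q i a * q i b = 0 := by
  have hpt : ∀ i, ∑ j ∈ Finset.univ.erase i, c i j * (q j a * q i b - q j b * q i a)
      = lam * (2 * m i * (q i a * q i b)) := by
    intro i
    have h1 := congrFun (hgrad i) a
    have h2 := congrFun (hgrad i) b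
    simp only [Finset.sum_apply, Pi.smul_apply, Pi.sub_apply, smul_eq_mul] at h1 h2
    have hkey : ∑ j ∈ Finset.univ.erase i, c i j * (q j a * q i b - q j b * q i a)
        = q i b * (∑ j ∈ Finset.univ.erase i, c i j * (q j a - k i j * q i a))
          - q i a * (∑ j ∈ Finset.univ.erase i, c i j * (q j b - k i j * q i b)) := by
      rw [Finset.mul_sum, Finset.mul_sum, ← Finset.sum_sub_distrib]
      exact Finset.sum_congr rfl fun j _ => by ring
    rw [hkey, h1, h2, ← hG i]; ring
  have hzero : ∑ i, ∑ j ∈ Finset.univ.erase i, c i j * (q j a * q i b - q j b * q i a) = 0 := by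
    apply sum_antisym
    intro i j
    rw [hcsym i j]; ring
  have h4 : ∑ i, lam * (2 * m i * (q i a * q i b)) = 0 := by
    rw [← hzero]; exact Finset.sum_congr rfl fun i _ => (hpt i).symm
  have h5 : lam * 2 * ∑ i, m i * q i a * q i b = 0 := by
    rw [Finset.mul_sum, ← h4]
    exact Finset.sum_congr rfl fun i _ => by ring
  rcases mul_eq_zero.mp h5 with h | h
  · exact absurd h (mul_ne_zero hlam two_ne_zero)
  · exact h

/-- The "centre of mass"-type relations for ordinary central
configurations in `S³` or `H³`. -/
theorem statement11 (N : ℕ) (m : Fin N → ℝ) (hm : ∀ i, 0 < m i)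
    (q : Fin N → V4) (lam : ℝ) (hlam : lam ≠ 0)
    (h : ((∀ i, q i ∈ sphere3) ∧ (∀ i j, i ≠ j → q i ≠ q j ∧ q i ≠ -q j) ∧
            ∀ i, gradUS m q i = lam • gradIS m q i) ∨
         ((∀ i, q i ∈ hyper3) ∧ (∀ i j, i ≠ j → q i ≠ q j) ∧
            ∀ i, gradUH m q i = lam • gradIH m q i)) :
    (∑ i, m i * q i 0 * q i 2 = 0) ∧ (∑ i, m i * q i 0 * q i 3 = 0) ∧
    (∑ i, m i * q i 1 * q i 2 = 0) ∧ (∑ i, m i * q i 1 * q i 3 = 0) := by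
  rcases h with ⟨hq, -, hc⟩ | ⟨hq, -, hc⟩
  · -- spherical case
    have hgrad : ∀ i, (∑ j ∈ Finset.univ.erase i,
        (fun i j => m i * m j / (Real.sin (dS (q i) (q j))) ^ 3) i j •
          (q j - (fun i j => Real.cos (dS (q i) (q j))) i j • q i)) = lam • gradIS m q i :=
      fun i => hc i
    have hcsym : ∀ i j, m i * m j / (Real.sin (dS (q i) (q j))) ^ 3
        = m j * m i / (Real.sin (dS (q j) (q i))) ^ 3 := by
      intro i j; rw [dS_comm (q j) (q i)]; ring
    have hG02 : ∀ i, q i 2 * gradIS m q i 0 - q i 0 * gradIS m q i 2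
        = 2 * m i * (q i 0 * q i 2) := by
      intro i
      have hs := hq i
      simp only [sphere3, Set.mem_setOf_eq] at hs
      simp only [gradIS, Pi.smul_apply, smul_eq_mul, Matrix.cons_val_zero, Matrix.cons_val_one,
        Matrix.head_cons, Matrix.cons_val_two, Matrix.tail_cons, Matrix.cons_val_three]
      linear_combination ((2 * m i * q i 0 * q i 2)) * hs
    have hG03 : ∀ i, q i 3 * gradIS m q i 0 - q i 0 * gradIS m q i 3
        = 2 * m i * (q i 0 * q i 3) := by
      intro i
      have hs := hq i
      simp only [sphere3, Set.mem_setOf_eq] at hs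
      simp only [gradIS, Pi.smul_apply, smul_eq_mul, Matrix.cons_val_zero, Matrix.cons_val_one,
        Matrix.head_cons, Matrix.cons_val_two, Matrix.tail_cons, Matrix.cons_val_three]
      linear_combination ((2 * m i * q i 0 * q i 3)) * hs
    have hG12 : ∀ i, q i 2 * gradIS m q i 1 - q i 1 * gradIS m q i 2
        = 2 * m i * (q i 1 * q i 2) := by
      intro i
      have hs := hq i
      simp only [sphere3, Set.mem_setOf_eq] at hs
      simp only [gradIS, Pi.smul_apply, smul_eq_mul, Matrix.cons_val_zero, Matrix.cons_val_one,
        Matrix.head_cons, Matrix.cons_val_two, Matrix.tail_cons, Matrix.cons_val_three]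
      linear_combination ((2 * m i * q i 1 * q i 2)) * hs
    have hG13 : ∀ i, q i 3 * gradIS m q i 1 - q i 1 * gradIS m q i 3
        = 2 * m i * (q i 1 * q i 3) := by
      intro i
      have hs := hq i
      simp only [sphere3, Set.mem_setOf_eq] at hs
      simp only [gradIS, Pi.smul_apply, smul_eq_mul, Matrix.cons_val_zero, Matrix.cons_val_one,
        Matrix.head_cons, Matrix.cons_val_two, Matrix.tail_cons, Matrix.cons_val_three]
      linear_combination ((2 * m i * q i 1 * q i 3)) * hs
    refine ⟨key m q lam hlam _ _ (gradIS m q) 0 2 hcsym hgrad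
        hG02,
      key m q lam hlam _ _ (gradIS m q) 0 3 hcsym hgrad
        hG03,
      key m q lam hlam _ _ (gradIS m q) 1 2 hcsym hgrad
        hG12,
      key m q lam hlam _ _ (gradIS m q) 1 3 hcsym hgrad
        hG13⟩
  · -- hyperbolic case
    have hgrad : ∀ i, (∑ j ∈ Finset.univ.erase i,
        (fun i j => m i * m j / (Real.sinh (dH (q i) (q j))) ^ 3) i j •
          (q j - (fun i j => Real.cosh (dH (q i) (q j))) i j • q i)) = lam • gradIH m q i :=
      fun i => hc i
    have hcsym : ∀ i j, m i * m j / (Real.sinh (dH (q i) (q j))) ^ 3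
        = m j * m i / (Real.sinh (dH (q j) (q i))) ^ 3 := by
      intro i j; rw [dH_comm (q j) (q i)]; ring
    have hG02 : ∀ i, q i 2 * gradIH m q i 0 - q i 0 * gradIH m q i 2
        = 2 * m i * (q i 0 * q i 2) := by
      intro i
      have hmem := hq i
      simp only [hyper3, Set.mem_setOf_eq] at hmem
      have hs := hmem.1
      simp only [gradIH, Pi.smul_apply, smul_eq_mul, Matrix.cons_val_zero, Matrix.cons_val_one,
        Matrix.head_cons, Matrix.cons_val_two, Matrix.tail_cons, Matrix.cons_val_three]
      linear_combination (-(2 * m i * q i 0 * q i 2)) * hs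
    have hG03 : ∀ i, q i 3 * gradIH m q i 0 - q i 0 * gradIH m q i 3
        = 2 * m i * (q i 0 * q i 3) := by
      intro i
      have hmem := hq i
      simp only [hyper3, Set.mem_setOf_eq] at hmem
      have hs := hmem.1
      simp only [gradIH, Pi.smul_apply, smul_eq_mul, Matrix.cons_val_zero, Matrix.cons_val_one,
        Matrix.head_cons, Matrix.cons_val_two, Matrix.tail_cons, Matrix.cons_val_three]
      linear_combination (-(2 * m i * q i 0 * q i 3)) * hs
    have hG12 : ∀ i, q i 2 * gradIH m q i 1 - q i 1 * gradIH m q i 2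
        = 2 * m i * (q i 1 * q i 2) := by
      intro i
      have hmem := hq i
      simp only [hyper3, Set.mem_setOf_eq] at hmem
      have hs := hmem.1
      simp only [gradIH, Pi.smul_apply, smul_eq_mul, Matrix.cons_val_zero, Matrix.cons_val_one,
        Matrix.head_cons, Matrix.cons_val_two, Matrix.tail_cons, Matrix.cons_val_three]
      linear_combination (-(2 * m i * q i 1 * q i 2)) * hs
    have hG13 : ∀ i, q i 3 * gradIH m q i 1 - q i 1 * gradIH m q i 3
        = 2 * m i * (q i 1 * q i 3) := by
      intro i
      have hmem := hq i
      simp only [hyper3, Set.mem_setOf_eq] at hmem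
      have hs := hmem.1
      simp only [gradIH, Pi.smul_apply, smul_eq_mul, Matrix.cons_val_zero, Matrix.cons_val_one,
        Matrix.head_cons, Matrix.cons_val_two, Matrix.tail_cons, Matrix.cons_val_three]
      linear_combination (-(2 * m i * q i 1 * q i 3)) * hs
    exact ⟨key m q lam hlam _ _ (gradIH m q) 0 2 hcsym hgrad
        hG02,
      key m q lam hlam _ _ (gradIH m q) 0 3 hcsym hgrad
        hG03,
      key m q lam hlam _ _ (gradIH m q) 1 2 hcsym hgrad
        hG12,
      key m q lam hlam _ _ (gradIH m q) 1 3 hcsym hgrad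
        hG13⟩
end
end
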